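/- Let (X_n) be a stochastic process on a probability space (Ω, F, P) and let φ : (0,1) × (0,1) → ℝ satisfy P(Fluc_∞(ε, X) ≥ φ(λ, ε)) < λ for all λ, ε ∈ (0,1) (a modulus of finite fluctuations). Then φ is a learnable rate of pointwise convergence for (X_n): for all λ, ε ∈ (0,1) and all naturals a_0 < b_0 ≤ a_1 < b_1 ≤ …, P(∀ n ≤ φ(λ, ε), ∃ i, j ∈ [a_n, b_n] with |X_i − X_j| ≥ ε) < λ. -/

import Mathlib

open MeasureTheory ENNReal

/-- There exist `k` many ε-fluctuations in the sequence `x`. -/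
def HasFluc (ε : ℝ) (x : ℕ → ℝ) (k : ℕ) : Prop :=
  ∃ i j : ℕ → ℕ, (∀ l < k, i l < j l) ∧ (∀ l, l + 1 < k → j l ≤ i (l + 1)) ∧
    ∀ l < k, ε ≤ |x (i l) - x (j l)|

/-- `Fluc_∞(ε, x)`, the total number of ε-fluctuations of `x`, as a value in `ℝ≥0∞`. -/
noncomputable def flucInf (ε : ℝ) (x : ℕ → ℝ) : ℝ≥0∞ :=
  ⨆ k ∈ {k : ℕ | HasFluc ε x k}, (k : ℝ≥0∞)

/-- If `φ` is a modulus of finite fluctuations for the process `X`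
(`P(Fluc_∞(ε, X) ≥ φ(λ, ε)) < λ` for all `λ, ε ∈ (0,1)`), then `φ` is a learnable rate of
pointwise convergence: for all `λ, ε ∈ (0,1)` and all `a₀ < b₀ ≤ a₁ < b₁ ≤ …`,
`P(∀ n ≤ φ(λ,ε), ∃ i, j ∈ [a n, b n], |X i - X j| ≥ ε) < λ`. -/
theorem stmt9 {Ω : Type} [MeasurableSpace Ω] (μ : Measure Ω) [IsProbabilityMeasure μ]
    (X : ℕ → Ω → ℝ) (hX : ∀ n, Measurable (X n))
    (φ : ℝ → ℝ → ℝ)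
    (hφ : ∀ lam ∈ Set.Ioo (0 : ℝ) 1, ∀ eps ∈ Set.Ioo (0 : ℝ) 1,
      μ {ω | ENNReal.ofReal (φ lam eps) ≤ flucInf eps fun n => X n ω} < ENNReal.ofReal lam) :
    ∀ lam ∈ Set.Ioo (0 : ℝ) 1, ∀ eps ∈ Set.Ioo (0 : ℝ) 1, ∀ a b : ℕ → ℕ,
      (∀ n, a n < b n) → (∀ n, b n ≤ a (n + 1)) →
      μ {ω | ∀ n : ℕ, (n : ℝ) ≤ φ lam eps →
          ∃ i ∈ Set.Icc (a n) (b n), ∃ j ∈ Set.Icc (a n) (b n), eps ≤ |X i ω - X j ω|}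
        < ENNReal.ofReal lam := by
  intro lam hlam eps heps a b hab hba
  refine lt_of_le_of_lt (measure_mono ?_) (hφ lam hlam eps heps)
  intro ω hω
  simp only [Set.mem_setOf_eq] at hω ⊢
  rcases le_or_gt (φ lam eps) 0 with h0 | h0
  · simp [ENNReal.ofReal_eq_zero.2 h0]
  set x := fun n => X n ω with hx
  set K := ⌊φ lam eps⌋₊ + 1 with hKdef
  have hK : ∀ l < K, (l : ℝ) ≤ φ lam eps := by
    intro l hl
    have : l ≤ ⌊φ lam eps⌋₊ := Nat.lt_succ_iff.mp hl
    exact le_trans (Nat.cast_le.2 this) (Nat.floor_le h0.le)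
  have hsel : ∀ l : ℕ, ∃ q : ℕ × ℕ, (l : ℝ) ≤ φ lam eps →
      a l ≤ q.1 ∧ q.1 < q.2 ∧ q.2 ≤ b l ∧ eps ≤ |x q.1 - x q.2| := by
    intro l
    by_cases hl : (l : ℝ) ≤ φ lam eps
    · obtain ⟨i, hi, j, hj, hij⟩ := hω l hl
      have hne : i ≠ j := by
        rintro rfl
        simp only [sub_self, abs_zero] at hij
        linarith [heps.1]
      rcases lt_or_gt_of_ne hne with h | h
      · exact ⟨(i, j), fun _ => ⟨hi.1, h, hj.2, hij⟩⟩
      · exact ⟨(j, i), fun _ => ⟨hj.1, h, hi.2, by rwa [abs_sub_comm]⟩⟩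
    · exact ⟨(0, 0), fun h => absurd h hl⟩
  choose q hq using hsel
  have hfluc : HasFluc eps x K := by
    refine ⟨fun l => (q l).1, fun l => (q l).2, ?_, ?_, ?_⟩
    · intro l hl; exact (hq l (hK l hl)).2.1
    · intro l hl
      have h1 := hq l (hK l (Nat.lt_of_succ_lt hl))
      have h2 := hq (l + 1) (hK _ hl)
      calc (q l).2 ≤ b l := h1.2.2.1
        _ ≤ a (l + 1) := hba l
        _ ≤ (q (l + 1)).1 := h2.1
    · intro l hl; exact (hq l (hK l hl)).2.2.2
  have hle : (K : ℝ≥0∞) ≤ flucInf eps x :=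
    le_iSup₂ (f := fun k (_ : k ∈ {k | HasFluc eps x k}) => (k : ℝ≥0∞)) K hfluc
  refine le_trans ?_ hle
  rw [← ENNReal.ofReal_natCast]
  exact ENNReal.ofReal_le_ofReal (by rw [hKdef]; push_cast; exact (Nat.lt_floor_add_one (φ lam eps)).le)
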